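/- In the ℤ₂-graded associative conformal algebra W = k[D] ⊗ Aₙ[v], the elements V := v, Xᵢ := vξᵢ, Pᵢ := ∂ᵢ (i = 1,…,n), with V even and Xᵢ, Pᵢ odd, satisfy the W-relations. (Equivalently, the map φ₂ : v ↦ v, ξᵢ ↦ vξᵢ, ∂ᵢ ↦ ∂ᵢ defines a homomorphism of Lie conformal superalgebras from Wₙ into W^{(−)}.) -/

import Mathlib

/-! ### Conformal algebras: basic definitions -/

/-- A conformal algebra over a field `k`: a `k`-vector space with a linear map `D`
and a family of bilinear `n`-th products satisfying (C1) locality, (C2) and (C3). -/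
structure ConfAlg (k : Type) [Field k] (C : Type) [AddCommGroup C] [Module k C] where
  Dmap : C →ₗ[k] C
  prod : ℕ → C →ₗ[k] C →ₗ[k] C
  locality : ∀ a b : C, ∃ N : ℕ, ∀ m, N ≤ m → prod m a b = 0
  axC2 : ∀ (m : ℕ) (a b : C), prod m (Dmap a) b = -((m : k)) • prod (m - 1) a b
  axC3 : ∀ (m : ℕ) (a b : C),
    prod m a (Dmap b) = Dmap (prod m a b) + (m : k) • prod (m - 1) a b

section BasicDefs

variable {k : Type} [Field k] {C : Type} [AddCommGroup C] [Module k C]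

/-- Left associativity identity for a conformal algebra. -/
def ConfAlg.IsAssoc (A : ConfAlg k C) : Prop :=
  ∀ (nn m : ℕ) (a b c : C),
    A.prod m (A.prod nn a b) c =
      ∑ s ∈ Finset.range (nn + 1),
        ((-1 : k) ^ s * (nn.choose s : k)) • A.prod (nn - s) a (A.prod (m + s) b c)

/-- A ℤ₂-grading of a conformal algebra: `grade false` is the even part,
`grade true` the odd part. -/
structure ConfGrading (A : ConfAlg k C) where
  grade : Bool → Submodule k C
  inf_bot : grade false ⊓ grade true = ⊥
  sup_top : grade false ⊔ grade true = ⊤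
  D_mem : ∀ (i : Bool), ∀ x ∈ grade i, A.Dmap x ∈ grade i
  prod_mem : ∀ (i j : Bool) (m : ℕ) (x y : C), x ∈ grade i → y ∈ grade j →
    A.prod m x y ∈ grade (xor i j)

/-- The "conjugate" product `{b ∘ₘ a} = ∑_{s ≥ 0} ((-1)^{m+s}/s!) • Dˢ (b ∘_{m+s} a)`,
a finite sum by locality, expressed via `finsum`. -/
noncomputable def cbrR (D : C →ₗ[k] C) (P : ℕ → C →ₗ[k] C →ₗ[k] C)
    (m : ℕ) (b a : C) : C :=
  ∑ᶠ s : ℕ, ((-1 : k) ^ (m + s) * ((Nat.factorial s : k))⁻¹) • (D ^ s) (P (m + s) b a)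

/-- The super-commutator `[a ∘ₘ b] = a ∘ₘ b - (-1)^{p(a)p(b)} {b ∘ₘ a}` for homogeneous
`a, b` of parities `pa, pb` (`false` = even, `true` = odd). -/
noncomputable def sbrR (D : C →ₗ[k] C) (P : ℕ → C →ₗ[k] C →ₗ[k] C)
    (pa pb : Bool) (m : ℕ) (a b : C) : C :=
  P m a b - (if pa && pb then (-1 : k) else 1) • cbrR D P m b a

/-- The defining relations of the Lie conformal superalgebra `Wₙ`, for homogeneous
elements `V` (even), `X i`, `Pd i` (odd) of an associative conformal algebra with
derivation `D` and products `P`. -/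
noncomputable def WRelsR (D : C →ₗ[k] C) (P : ℕ → C →ₗ[k] C →ₗ[k] C) {n : ℕ}
    (V : C) (X Pd : Fin n → C) : Prop :=
  (∀ i j, sbrR D P true true 0 (X i) (X j) = - sbrR D P true true 0 (X j) (X i)) ∧
  (∀ (m : ℕ) (i j), sbrR D P true true m (Pd i) (Pd j) = 0) ∧
  (∀ i j, sbrR D P true true 0 (Pd j) (X i) = if i = j then V else 0) ∧
  (∀ i, sbrR D P false true 0 V (X i) = D (X i)) ∧
  (∀ i, sbrR D P true false 0 (X i) V = D (X i)) ∧
  (∀ i, sbrR D P true false 1 (X i) V = (2 : k) • X i) ∧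
  (∀ j, sbrR D P true false 0 (Pd j) V = 0) ∧
  (∀ j, sbrR D P true false 1 (Pd j) V = Pd j) ∧
  (∀ i j, sbrR D P true true 0 (X i) (X j)
      = ((2 : k))⁻¹ • D (sbrR D P true true 1 (X i) (X j))) ∧
  (sbrR D P false false 0 V V = D V) ∧
  (sbrR D P false false 1 V V = (2 : k) • V) ∧
  (∀ m, 2 ≤ m →
    (∀ i j, sbrR D P true true m (X i) (X j) = 0) ∧
    (∀ j, sbrR D P false true m V (Pd j) = 0) ∧
    (∀ i j, sbrR D P true true m (X i) (Pd j) = 0) ∧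
    (∀ i, sbrR D P false true m V (X i) = 0) ∧
    sbrR D P false false m V V = 0)

end BasicDefs
set_option maxSynthPendingDepth 5

/-! ### The algebra `Aₙ` and the conformal algebra `W = k[D] ⊗ Aₙ[v]` -/

/-- Generators of the algebra `Aₙ`: `xi i` stands for `ξᵢ`, `pa i` for `∂ᵢ`. -/
inductive WGen (n : ℕ) : Type
  | xi : Fin n → WGen n
  | pa : Fin n → WGen n

/-- The defining relations of `Aₙ`:
`ξᵢξⱼ + ξⱼξᵢ = 0`, `∂ᵢ∂ⱼ + ∂ⱼ∂ᵢ = 0`, `∂ᵢξⱼ + ξⱼ∂ᵢ = δᵢⱼ·1`. -/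
inductive ARel (k : Type) [Field k] (n : ℕ) :
    FreeAlgebra k (WGen n) → FreeAlgebra k (WGen n) → Prop
  | xixi (i j : Fin n) : ARel k n
      (FreeAlgebra.ι k (WGen.xi i) * FreeAlgebra.ι k (WGen.xi j)
        + FreeAlgebra.ι k (WGen.xi j) * FreeAlgebra.ι k (WGen.xi i)) 0
  | papa (i j : Fin n) : ARel k n
      (FreeAlgebra.ι k (WGen.pa i) * FreeAlgebra.ι k (WGen.pa j)
        + FreeAlgebra.ι k (WGen.pa j) * FreeAlgebra.ι k (WGen.pa i)) 0
  | paxi (i j : Fin n) : ARel k n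
      (FreeAlgebra.ι k (WGen.pa i) * FreeAlgebra.ι k (WGen.xi j)
        + FreeAlgebra.ι k (WGen.xi j) * FreeAlgebra.ι k (WGen.pa i))
      (if i = j then 1 else 0)

/-- The algebra `Aₙ`. -/
abbrev An (k : Type) [Field k] (n : ℕ) := RingQuot (ARel k n)

/-- `Aₙ[v]`: polynomials over `Aₙ` in the variable `v` (= `Polynomial.X`). -/
abbrev Av (k : Type) [Field k] (n : ℕ) := Polynomial (An k n)

/-- `W = k[D] ⊗ Aₙ[v]`, realized as polynomials in the (outer) variable `D`
with coefficients in `Aₙ[v]`; the element `Dᵗ ⊗ w` is `(monomial t) w`. -/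
abbrev Wc (k : Type) [Field k] (n : ℕ) := Polynomial (Av k n)

/-- The generator `ξᵢ ∈ Aₙ`. -/
noncomputable def xg (k : Type) [Field k] (n : ℕ) (i : Fin n) : An k n :=
  RingQuot.mkAlgHom k (ARel k n) (FreeAlgebra.ι k (WGen.xi i))

/-- The generator `∂ᵢ ∈ Aₙ`. -/
noncomputable def dg (k : Type) [Field k] (n : ℕ) (i : Fin n) : An k n :=
  RingQuot.mkAlgHom k (ARel k n) (FreeAlgebra.ι k (WGen.pa i))

/-- The element `v = 1 ⊗ v ∈ W`. -/
noncomputable def vW (k : Type) [Field k] (n : ℕ) : Wc k n :=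
  Polynomial.C Polynomial.X

/-- The element `ξᵢ = 1 ⊗ ξᵢ ∈ W`. -/
noncomputable def xiW (k : Type) [Field k] (n : ℕ) (i : Fin n) : Wc k n :=
  Polynomial.C (Polynomial.C (xg k n i))

/-- The element `∂ᵢ = 1 ⊗ ∂ᵢ ∈ W`. -/
noncomputable def paW (k : Type) [Field k] (n : ℕ) (i : Fin n) : Wc k n :=
  Polynomial.C (Polynomial.C (dg k n i))

/-- The element `v - D = 1 ⊗ v - D ⊗ 1 ∈ W`. -/
noncomputable def vmD (k : Type) [Field k] (n : ℕ) : Wc k n :=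
  (Polynomial.C (Polynomial.X : Av k n) : Wc k n) - (Polynomial.X : Wc k n)

/-- The map `D` on `W`: multiplication by the outer variable. -/
noncomputable def Dm (k : Type) [Field k] (n : ℕ) : Wc k n →ₗ[k] Wc k n :=
  LinearMap.mulLeft k (Polynomial.X : Wc k n)

/-- The condition characterizing the conformal products of `W`:
`(1 ⊗ f) ∘ₘ (1 ⊗ g) = 1 ⊗ f·(∂ᵐ g/∂vᵐ)` together with axioms (C2) and (C3). -/
def IsWProd (k : Type) [Field k] (n : ℕ)
    (P : ℕ → Wc k n →ₗ[k] Wc k n →ₗ[k] Wc k n) : Prop :=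
  (∀ (m : ℕ) (f g : Av k n),
      P m (Polynomial.C f) (Polynomial.C g)
        = Polynomial.C (f * (fun q => Polynomial.derivative q)^[m] g)) ∧
  (∀ (m : ℕ) (a b : Wc k n), P m (Dm k n a) b = -((m : k)) • P (m - 1) a b) ∧
  (∀ (m : ℕ) (a b : Wc k n),
      P m a (Dm k n b) = Dm k n (P m a b) + (m : k) • P (m - 1) a b)

/-- The locality function `N_W(x,y) = min {N | x ∘ₘ y = 0 for all m ≥ N}`. -/
noncomputable def locNW (k : Type) [Field k] (n : ℕ)
    (P : ℕ → Wc k n →ₗ[k] Wc k n →ₗ[k] Wc k n) (x y : Wc k n) : ℕ :=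
  sInf {N : ℕ | ∀ m, N ≤ m → P m x y = 0}

/-- The smallest `D`-invariant subspace of `W` closed under all the products and
containing a set `S`. -/
noncomputable def confCl (k : Type) [Field k] (n : ℕ)
    (P : ℕ → Wc k n →ₗ[k] Wc k n →ₗ[k] Wc k n) (S : Set (Wc k n)) :
    Submodule k (Wc k n) :=
  sInf {U : Submodule k (Wc k n) | S ⊆ U ∧ (∀ x ∈ U, Dm k n x ∈ U) ∧
    ∀ (m : ℕ), ∀ x ∈ U, ∀ y ∈ U, P m x y ∈ U}

/-- The conformal subalgebra `C₁ ⊆ W`, generated by `v - D`, `(v - D)ξᵢ`, `∂ᵢ`. -/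
noncomputable def C1sub (k : Type) [Field k] (n : ℕ)
    (P : ℕ → Wc k n →ₗ[k] Wc k n →ₗ[k] Wc k n) : Submodule k (Wc k n) :=
  confCl k n P
    ({vmD k n} ∪ Set.range (fun i => vmD k n * xiW k n i) ∪ Set.range (paW k n))

/-- The conformal subalgebra `C₂ ⊆ W`, generated by `v`, `vξᵢ`, `∂ᵢ`. -/
noncomputable def C2sub (k : Type) [Field k] (n : ℕ)
    (P : ℕ → Wc k n →ₗ[k] Wc k n →ₗ[k] Wc k n) : Submodule k (Wc k n) :=
  confCl k n P
    ({vW k n} ∪ Set.range (fun i => vW k n * xiW k n i) ∪ Set.range (paW k n))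

section AuxLemmas
set_option linter.unusedSectionVars false
open Polynomial

variable {k : Type} [Field k] [CharZero k] {n : ℕ}

section CbrGeneral
variable {M : Type} [AddCommGroup M] [Module k M]

lemma cbrR_eq_two_terms (D : M →ₗ[k] M) (P : ℕ → M →ₗ[k] M →ₗ[k] M) (m : ℕ) (b a : M)
    (hz : ∀ t, 2 ≤ t → P t b a = 0) :
    cbrR D P m b a
      = ((-1 : k) ^ m) • P m b a + ((-1 : k) ^ (m + 1)) • D (P (m + 1) b a) := by
  have h : cbrR D P m b a = ∑ s ∈ Finset.range 2,
      ((-1 : k) ^ (m + s) * ((Nat.factorial s : k))⁻¹) • (D ^ s) (P (m + s) b a) := by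
    apply finsum_eq_finset_sum_of_support_subset
    intro s hs
    simp only [Function.mem_support] at hs
    simp only [Finset.coe_range, Set.mem_Iio]
    by_contra hcon
    push_neg at hcon
    have : P (m + s) b a = 0 := hz _ (le_trans hcon (Nat.le_add_left _ _))
    rw [this] at hs
    simp at hs
  rw [h, Finset.sum_range_succ, Finset.sum_range_one]
  simp [Nat.factorial]

lemma cbrR_eq_zero' (D : M →ₗ[k] M) (P : ℕ → M →ₗ[k] M →ₗ[k] M) (m : ℕ) (b a : M)
    (hz : ∀ s, P (m + s) b a = 0) : cbrR D P m b a = 0 := by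
  unfold cbrR
  apply finsum_eq_zero_of_forall_eq_zero
  intro s
  rw [hz s]
  simp

end CbrGeneral

lemma xg_rel (i j : Fin n) :
    xg k n i * xg k n j = -(xg k n j * xg k n i) := by
  have h := RingQuot.mkAlgHom_rel k (ARel.xixi (k := k) i j)
  simp only [map_add, map_mul, map_zero] at h
  rw [eq_neg_iff_add_eq_zero]
  exact h

lemma dg_rel (i j : Fin n) :
    dg k n i * dg k n j = -(dg k n j * dg k n i) := by
  have h := RingQuot.mkAlgHom_rel k (ARel.papa (k := k) i j)
  simp only [map_add, map_mul, map_zero] at h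
  rw [eq_neg_iff_add_eq_zero]
  exact h

lemma dx_rel (i j : Fin n) :
    dg k n i * xg k n j + xg k n j * dg k n i = if i = j then 1 else 0 := by
  have h := RingQuot.mkAlgHom_rel k (ARel.paxi (k := k) i j)
  simp only [map_add, map_mul] at h
  unfold dg xg
  split_ifs with hij
  · simpa [hij] using h
  · simpa [hij] using h

lemma Dm_monomial (t : ℕ) (p : Av k n) :
    Dm k n ((Polynomial.monomial t) p) = (Polynomial.monomial (t + 1)) p := by
  simp only [Dm, LinearMap.mulLeft_apply, Polynomial.X_mul_monomial]

section PrVals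
variable (Pr : ℕ → Wc k n →ₗ[k] Wc k n →ₗ[k] Wc k n) (hPr : IsWProd k n Pr)
include hPr

lemma Pr0_val (p q : ℕ) (a b : An k n) :
    Pr 0 (Polynomial.C ((monomial p) a)) (Polynomial.C ((monomial q) b))
      = Polynomial.C ((monomial (p + q)) (a * b)) := by
  rw [hPr.1 0]
  simp [Polynomial.monomial_mul_monomial]

lemma Pr1_val (p : ℕ) (a b : An k n) :
    Pr 1 (Polynomial.C ((monomial p) a)) (Polynomial.C ((monomial 1) b))
      = Polynomial.C ((monomial p) (a * b)) := by
  rw [hPr.1 1]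
  simp [Polynomial.derivative_monomial, Polynomial.monomial_mul_monomial]

lemma Pr1_zero (p : ℕ) (a b : An k n) :
    Pr 1 (Polynomial.C ((monomial p) a)) (Polynomial.C ((monomial 0) b)) = 0 := by
  rw [hPr.1 1]
  simp [Polynomial.derivative_monomial]

lemma Pr_ge2 (t : ℕ) (ht : 2 ≤ t) (p q : ℕ) (hq : q ≤ 1) (a b : An k n) :
    Pr t (Polynomial.C ((monomial p) a)) (Polynomial.C ((monomial q) b)) = 0 := by
  obtain ⟨s, rfl⟩ : ∃ s, t = s + 2 := ⟨t - 2, by omega⟩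
  rw [hPr.1]
  have h2 : Polynomial.derivative (Polynomial.derivative ((monomial q) b : Av k n)) = 0 := by
    interval_cases q <;> simp [Polynomial.derivative_monomial]
  have hit : (fun r => Polynomial.derivative r)^[s + 2] ((monomial q) b : Av k n) = 0 := by
    rw [show s + 2 = s + 1 + 1 from rfl, Function.iterate_succ_apply,
      Function.iterate_succ_apply]
    rw [show Polynomial.derivative ((fun r => Polynomial.derivative r) ((monomial q) b : Av k n)) = 0 from h2]
    exact Function.iterate_fixed (by simp) s
  rw [hit]
  simp

end PrVals

lemma vW_eq : vW k n = Polynomial.C ((monomial 1) (1 : An k n)) := by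
  rw [vW, Polynomial.monomial_one_one_eq_X]

lemma XW_eq (i : Fin n) :
    vW k n * xiW k n i = Polynomial.C ((monomial 1) (xg k n i)) := by
  rw [vW, xiW, ← map_mul]
  congr 1
  rw [← Polynomial.monomial_one_one_eq_X, ← Polynomial.monomial_zero_left,
    Polynomial.monomial_mul_monomial, one_mul]

lemma paW_eq (j : Fin n) :
    paW k n j = Polynomial.C ((monomial 0) (dg k n j)) := by
  rw [paW, Polynomial.monomial_zero_left]

lemma Dm_C (p : Av k n) :
    Dm k n (Polynomial.C p) = (Polynomial.monomial 1) p := by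
  rw [← Polynomial.monomial_zero_left, Dm_monomial]

end AuxLemmas

set_option maxHeartbeats 2000000 in
set_option synthInstance.maxHeartbeats 500000 in
/-- the elements `V = v`, `Xᵢ = vξᵢ` (odd), `Pᵢ = ∂ᵢ` (odd)
of `W` satisfy the defining relations of `Wₙ` (i.e. `φ₂` is a homomorphism of Lie
conformal superalgebras `Wₙ → W⁽⁻⁾`). -/
theorem stmt_4 (k : Type) [Field k] [CharZero k] (n : ℕ) (hn : 1 ≤ n)
    (Pr : ℕ → Wc k n →ₗ[k] Wc k n →ₗ[k] Wc k n) (hPr : IsWProd k n Pr) :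
    WRelsR (Dm k n) Pr (vW k n) (fun i => vW k n * xiW k n i) (paW k n) := by
  have eV : vW k n = Polynomial.C ((Polynomial.monomial 1) (1 : An k n)) := vW_eq
  have eX : ∀ i, vW k n * xiW k n i
      = Polynomial.C ((Polynomial.monomial 1) (xg k n i)) := XW_eq
  have eP : ∀ j, paW k n j
      = Polynomial.C ((Polynomial.monomial 0) (dg k n j)) := paW_eq
  have hz2 : ∀ (p q : ℕ), q ≤ 1 → ∀ (a b : An k n), ∀ t, 2 ≤ t →
      Pr t (Polynomial.C ((Polynomial.monomial p) a))
        (Polynomial.C ((Polynomial.monomial q) b)) = 0 :=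
    fun p q hq a b t ht => Pr_ge2 Pr hPr t ht p q hq a b
  have hP0 := Pr0_val Pr hPr
  have hP1 := Pr1_val Pr hPr
  have hP1z := Pr1_zero Pr hPr
  refine ⟨?_, ?_, ?_, ?_, ?_, ?_, ?_, ?_, ?_, ?_, ?_, ?_⟩
  · -- [Xi ∘₀ Xj] = -[Xj ∘₀ Xi]
    intro i j
    simp only [eX]
    unfold sbrR
    rw [cbrR_eq_two_terms _ _ _ _ _ (hz2 1 1 le_rfl _ _),
        cbrR_eq_two_terms _ _ _ _ _ (hz2 1 1 le_rfl _ _),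
        hP0, hP0, hP1, hP1, Dm_C, Dm_C]
    rw [xg_rel i j]
    simp only [map_neg]
    norm_num
  · -- [Pi ∘ₘ Pj] = 0
    intro m i j
    simp only [eP]
    have hzPP : ∀ (a b : An k n) (t : ℕ), 1 ≤ t →
        Pr t (Polynomial.C ((Polynomial.monomial 0) a))
          (Polynomial.C ((Polynomial.monomial 0) b)) = 0 := by
      intro a b t ht
      rcases t with _ | _ | t
      · omega
      · exact hP1z 0 a b
      · exact Pr_ge2 Pr hPr _ (by omega) 0 0 (by omega) a b
    rcases m with _ | m
    · unfold sbrR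
      rw [cbrR_eq_two_terms _ _ _ _ _ (hz2 0 0 (by omega) _ _),
          hP0, hP0, hP1z]
      rw [dg_rel i j]
      simp only [map_neg]
      norm_num
    · unfold sbrR
      rw [hzPP _ _ _ (by omega),
          cbrR_eq_zero' _ _ _ _ _ (fun s => hzPP _ _ _ (by omega))]
      simp
  · -- [Pj ∘₀ Xi] = δ
    intro i j
    simp only [eP, eX]
    unfold sbrR
    rw [cbrR_eq_two_terms _ _ _ _ _ (hz2 1 0 (by omega) _ _),
        hP0, hP0, hP1z]
    norm_num
    rw [← map_add, ← map_add, dx_rel j i]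
    by_cases hij : i = j
    · subst hij
      rw [if_pos rfl, if_pos rfl, eV]
    · rw [if_neg (fun h => hij h.symm), if_neg hij, map_zero, map_zero]
  · -- [V ∘₀ Xi] = D Xi
    intro i
    simp only [eX]; simp only [eV]
    unfold sbrR
    rw [cbrR_eq_two_terms _ _ _ _ _ (hz2 1 1 le_rfl _ _),
        hP0, hP0, hP1, Dm_C, Dm_C]
    norm_num
  · -- [Xi ∘₀ V] = D Xi
    intro i
    simp only [eX]; simp only [eV]
    unfold sbrR
    rw [cbrR_eq_two_terms _ _ _ _ _ (hz2 1 1 le_rfl _ _),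
        hP0, hP0, hP1, Dm_C, Dm_C]
    norm_num
  · -- [Xi ∘₁ V] = 2 Xi
    intro i
    simp only [eX]; simp only [eV]
    unfold sbrR
    rw [cbrR_eq_two_terms _ _ _ _ _ (hz2 1 1 le_rfl _ _),
        hP1, hP1, hz2 1 1 le_rfl _ _ 2 le_rfl]
    norm_num
    rw [two_smul, map_add]
  · -- [Pj ∘₀ V] = 0
    intro j
    simp only [eV, eP]
    unfold sbrR
    rw [cbrR_eq_two_terms _ _ _ _ _ (hz2 1 0 (by omega) _ _)]
    rw [hP0, hP0, hP1z]
    norm_num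
  · -- [Pj ∘₁ V] = Pj
    intro j
    simp only [eV, eP]
    unfold sbrR
    rw [cbrR_eq_two_terms _ _ _ _ _ (hz2 1 0 (by omega) _ _)]
    rw [hP1, hP1z, hz2 1 0 (by omega) _ _ 2 le_rfl]
    norm_num
  · -- [Xi ∘₀ Xj] = (1/2) D [Xi ∘₁ Xj]
    intro i j
    simp only [eX]
    unfold sbrR
    rw [cbrR_eq_two_terms _ _ _ _ _ (hz2 1 1 le_rfl _ _),
        cbrR_eq_two_terms _ _ _ _ _ (hz2 1 1 le_rfl _ _),
        hP0, hP0, hP1, hP1,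
        hz2 1 1 le_rfl _ _ 2 le_rfl, Dm_C]
    rw [xg_rel i j]
    simp only [map_neg]
    norm_num
    rw [Dm_C]
    module
  · -- [V ∘₀ V] = D V
    unfold sbrR
    rw [eV, cbrR_eq_two_terms _ _ _ _ _ (hz2 1 1 le_rfl _ _),
        hP0, hP1, Dm_C, Dm_C]
    norm_num
  · -- [V ∘₁ V] = 2 V
    unfold sbrR
    rw [eV, cbrR_eq_two_terms _ _ _ _ _ (hz2 1 1 le_rfl _ _),
        hP1, hz2 1 1 le_rfl _ _ 2 le_rfl]
    norm_num
    rw [two_smul, map_add]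
  · -- m ≥ 2 relations
    intro m hm
    have key : ∀ (pa pb : Bool) (p q : ℕ), p ≤ 1 → q ≤ 1 → ∀ (a b : An k n),
        sbrR (Dm k n) Pr pa pb m (Polynomial.C ((Polynomial.monomial p) a))
          (Polynomial.C ((Polynomial.monomial q) b)) = 0 := by
      intro pa pb p q hp hq a b
      unfold sbrR
      rw [Pr_ge2 Pr hPr m hm p q hq,
          cbrR_eq_zero' _ _ _ _ _ (fun s => Pr_ge2 Pr hPr (m + s) (by omega) q p hp b a)]
      simp
    refine ⟨fun i j => ?_, fun j => ?_, fun i j => ?_, fun i => ?_, ?_⟩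
    · simp only [eX]; exact key _ _ 1 1 le_rfl le_rfl _ _
    · simp only [eV, eP]; exact key _ _ 1 0 le_rfl (by omega) _ _
    · simp only [eX, eP]; exact key _ _ 1 0 le_rfl (by omega) _ _
    · simp only [eX]; simp only [eV]; exact key _ _ 1 1 le_rfl le_rfl _ _
    · simp only [eV]; exact key _ _ 1 1 le_rfl le_rfl _ _
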